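/- For every integer B ≥ 1 and every real ρ ≥ 0, the quantity p̂(B,ρ) = ∑_{l=0}^{B} C(B,l) (−1)^l e^{−(B+1)ρ·l/(l+1)} satisfies the Bonferroni bounds 1 − B·e^{−(B+1)ρ/2} ≤ p̂(B,ρ) ≤ 1 − B·e^{−(B+1)ρ/2} + (B(B−1)/2)·e^{−2(B+1)ρ/3}. -/

import Mathlib

/-- Alternating finite-difference functional `∑ i (-1)^i C(q,i) f(p+i)`. -/
noncomputable def altT (f : ℕ → ℝ) (q p : ℕ) : ℝ :=
  ∑ i ∈ Finset.range (q + 1), (-1 : ℝ) ^ i * (q.choose i : ℝ) * f (p + i)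

/-- Completely monotone sequence. -/
def CMono (f : ℕ → ℝ) : Prop := ∀ q p : ℕ, 0 ≤ altT f q p

lemma altT_zero (f : ℕ → ℝ) (p : ℕ) : altT f 0 p = f p := by simp [altT]

lemma altT_shift (f : ℕ → ℝ) (q p : ℕ) :
    altT (fun l => f (l + 1)) q p = altT f q (p + 1) := by
  unfold altT
  refine Finset.sum_congr rfl fun i _ => ?_
  show (-1:ℝ) ^ i * (q.choose i : ℝ) * f (p + i + 1) = _
  have h : p + i + 1 = p + 1 + i := by omega
  rw [h]

lemma altT_succ (f : ℕ → ℝ) (q p : ℕ) :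
    altT f (q + 1) p = altT f q p - altT f q (p + 1) := by
  have claim2 : ∀ r : ℕ, altT f q r
      = f r - ∑ i ∈ Finset.range (q + 1), (-1 : ℝ) ^ i * (q.choose (i + 1) : ℝ) * f (r + (i + 1)) := by
    intro r
    rw [Finset.sum_range_succ]
    simp only [Nat.choose_succ_self, Nat.cast_zero, mul_zero, zero_mul, add_zero]
    unfold altT
    rw [Finset.sum_range_succ']
    simp only [pow_zero, Nat.choose_zero_right, Nat.cast_one, one_mul, add_zero]
    have : ∀ i ∈ Finset.range q, (-1 : ℝ) ^ (i + 1) * (q.choose (i + 1) : ℝ) * f (r + (i + 1))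
        = -((-1 : ℝ) ^ i * (q.choose (i + 1) : ℝ) * f (r + (i + 1))) := by
      intro i _; ring
    rw [Finset.sum_congr rfl this, Finset.sum_neg_distrib]
    ring
  have claim1 : altT f (q + 1) p
      = f p - altT f q (p + 1)
        - ∑ i ∈ Finset.range (q + 1), (-1 : ℝ) ^ i * (q.choose (i + 1) : ℝ) * f (p + (i + 1)) := by
    unfold altT
    rw [Finset.sum_range_succ']
    simp only [pow_zero, Nat.choose_zero_right, Nat.cast_one, one_mul, add_zero]
    have : ∀ i ∈ Finset.range (q + 1),
        (-1 : ℝ) ^ (i + 1) * ((q + 1).choose (i + 1) : ℝ) * f (p + (i + 1))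
        = -((-1 : ℝ) ^ i * (q.choose i : ℝ) * f (p + 1 + i))
          - (-1 : ℝ) ^ i * (q.choose (i + 1) : ℝ) * f (p + (i + 1)) := by
      intro i _
      have h : p + (i + 1) = p + 1 + i := by omega
      rw [h, Nat.choose_succ_succ]
      push_cast
      ring
    rw [Finset.sum_congr rfl this, Finset.sum_sub_distrib, Finset.sum_neg_distrib]
    ring
  rw [claim1, claim2 p]
  ring
lemma altT_add (f g : ℕ → ℝ) (q p : ℕ) :
    altT (fun l => f l + g l) q p = altT f q p + altT g q p := by
  unfold altT
  rw [← Finset.sum_add_distrib]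
  exact Finset.sum_congr rfl fun i _ => by ring

lemma altT_sub (f g : ℕ → ℝ) (q p : ℕ) :
    altT (fun l => f l - g l) q p = altT f q p - altT g q p := by
  unfold altT
  rw [← Finset.sum_sub_distrib]
  exact Finset.sum_congr rfl fun i _ => by ring

lemma CMono.nonneg {f : ℕ → ℝ} (hf : CMono f) (p : ℕ) : 0 ≤ f p := by
  have := hf 0 p; rwa [altT_zero] at this

lemma CMono.shift {f : ℕ → ℝ} (hf : CMono f) : CMono (fun l => f (l + 1)) := by
  intro q p; rw [altT_shift]; exact hf q (p + 1)

lemma CMono.diff {f : ℕ → ℝ} (hf : CMono f) : CMono (fun l => f l - f (l + 1)) := by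
  intro q p
  rw [altT_sub, altT_shift, ← altT_succ]
  exact hf (q + 1) p

lemma altT_le_self {f : ℕ → ℝ} (hf : CMono f) (q p : ℕ) : altT f q p ≤ f p := by
  induction q with
  | zero => rw [altT_zero]
  | succ q ih =>
      rw [altT_succ]
      have := hf q (p + 1)
      linarith

lemma CMono.mul {f g : ℕ → ℝ} (hf : CMono f) (hg : CMono g) :
    CMono (fun l => f l * g l) := by
  suffices H : ∀ q (f g : ℕ → ℝ), CMono f → CMono g → ∀ p, 0 ≤ altT (fun l => f l * g l) q p by
    intro q p; exact H q f g hf hg p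
  intro q
  induction q with
  | zero =>
      intro f g hf hg p
      rw [altT_zero]
      exact mul_nonneg (hf.nonneg p) (hg.nonneg p)
  | succ q ih =>
      intro f g hf hg p
      have e1 : altT (fun l => f l * g l) (q + 1) p
          = altT (fun l => f l * (g l - g (l + 1))) q p
            + altT (fun l => (f l - f (l + 1)) * (g (l + 1))) q p := by
        rw [altT_succ, ← altT_shift (fun l => f l * g l), ← altT_sub, ← altT_add]
        exact congrFun (congrFun (congrArg altT (funext fun l => by ring)) q) p
      rw [e1]
      have h1 := ih f (fun l => g l - g (l + 1)) hf hg.diff p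
      have h2 := ih (fun l => f l - f (l + 1)) (fun l => g (l + 1)) hf.diff hg.shift p
      linarith

lemma CMono.const_one : CMono (fun _ => (1 : ℝ)) := by
  intro q p
  have h : altT (fun _ => (1 : ℝ)) q p
      = ((∑ i ∈ Finset.range (q + 1), (-1 : ℤ) ^ i * (q.choose i : ℤ) : ℤ) : ℝ) := by
    unfold altT
    push_cast
    exact Finset.sum_congr rfl fun i _ => by ring
  rw [h, Int.alternating_sum_range_choose]
  split <;> norm_num

lemma CMono.pow {f : ℕ → ℝ} (hf : CMono f) (m : ℕ) : CMono (fun l => (f l) ^ m) := by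
  induction m with
  | zero => simpa using CMono.const_one
  | succ m ih =>
      have := ih.mul hf
      intro q p
      have e : altT (fun l => f l ^ (m + 1)) q p = altT (fun l => f l ^ m * f l) q p := by
        exact congrFun (congrFun (congrArg altT (funext fun l => by ring)) q) p
      rw [e]; exact this q p
lemma altT_inv_succ : ∀ q p : ℕ, altT (fun l => 1 / ((l : ℝ) + 1)) q p
    = (p.factorial : ℝ) * (q.factorial : ℝ) / ((p + q + 1).factorial : ℝ) := by
  intro q
  induction q with
  | zero =>
      intro p
      rw [altT_zero]
      have h : (p + 0 + 1).factorial = (p + 1) * p.factorial := by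
        simp [Nat.factorial_succ]
      rw [h]
      have hp : (p.factorial : ℝ) ≠ 0 := Nat.cast_ne_zero.2 (Nat.factorial_ne_zero p)
      have hp1 : ((p : ℝ) + 1) ≠ 0 := by positivity
      push_cast
      field_simp
      simp
  | succ q ih =>
      intro p
      rw [altT_succ, ih, ih]
      have e1 : p + 1 + q + 1 = (p + q + 1) + 1 := by omega
      have e2 : p + (q + 1) + 1 = (p + q + 1) + 1 := by omega
      rw [e1, e2, Nat.factorial_succ (p + q + 1), Nat.factorial_succ p, Nat.factorial_succ q]
      have h1 : ((p + q + 1).factorial : ℝ) ≠ 0 := Nat.cast_ne_zero.2 (Nat.factorial_ne_zero _)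
      have h2 : ((p : ℝ) + (q : ℝ) + 1 + 1) ≠ 0 := by positivity
      push_cast
      field_simp
      ring

lemma cmono_inv_succ : CMono (fun l => 1 / ((l : ℝ) + 1)) := by
  intro q p
  rw [altT_inv_succ]
  positivity

lemma real_exp_tsum (x : ℝ) : Real.exp x = ∑' m : ℕ, x ^ m / m.factorial := by
  rw [Real.exp_eq_exp_ℝ, NormedSpace.exp_eq_tsum_div]

lemma cmono_exp_seq (c : ℝ) (hc : 0 ≤ c) :
    CMono (fun l => Real.exp (-(c * (l : ℝ) / ((l : ℝ) + 1)))) := by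
  intro q p
  have hterm : ∀ l : ℕ, Real.exp (-(c * (l : ℝ) / ((l : ℝ) + 1)))
      = ∑' m : ℕ, Real.exp (-c) * (c ^ m / m.factorial) * (1 / ((l : ℝ) + 1)) ^ m := by
    intro l
    have hl : ((l : ℝ) + 1) ≠ 0 := by positivity
    have h1 : -(c * (l : ℝ) / ((l : ℝ) + 1)) = -c + c * (1 / ((l : ℝ) + 1)) := by
      field_simp
      ring
    rw [h1, Real.exp_add, real_exp_tsum (c * (1 / ((l : ℝ) + 1))), ← tsum_mul_left]
    refine tsum_congr fun m => ?_
    rw [mul_pow]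
    ring
  have hsummand : ∀ i : ℕ, Summable (fun m : ℕ =>
      (-1 : ℝ) ^ i * (q.choose i : ℝ) *
        (Real.exp (-c) * (c ^ m / m.factorial) * (1 / (((p + i : ℕ) : ℝ) + 1)) ^ m)) := by
    intro i
    have hbase : Summable (fun m : ℕ =>
        (c * (1 / (((p + i : ℕ) : ℝ) + 1))) ^ m / m.factorial) :=
      Real.summable_pow_div_factorial _
    have := (hbase.mul_left ((-1 : ℝ) ^ i * (q.choose i : ℝ) * Real.exp (-c)))
    refine this.congr fun m => ?_
    rw [mul_pow]
    ring
  have key : altT (fun l => Real.exp (-(c * (l : ℝ) / ((l : ℝ) + 1)))) q p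
      = ∑' m : ℕ, (Real.exp (-c) * (c ^ m / m.factorial))
          * altT (fun l => (1 / ((l : ℝ) + 1)) ^ m) q p := by
    unfold altT
    have e1 : ∀ i ∈ Finset.range (q + 1),
        (-1 : ℝ) ^ i * (q.choose i : ℝ) * Real.exp (-(c * ((p + i : ℕ) : ℝ) / (((p + i : ℕ) : ℝ) + 1)))
        = ∑' m : ℕ, (-1 : ℝ) ^ i * (q.choose i : ℝ) *
            (Real.exp (-c) * (c ^ m / m.factorial) * (1 / (((p + i : ℕ) : ℝ) + 1)) ^ m) := by
      intro i _
      rw [hterm (p + i), ← tsum_mul_left]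
    rw [Finset.sum_congr rfl e1, ← Summable.tsum_finsetSum (fun i _ => hsummand i)]
    refine tsum_congr fun m => ?_
    rw [Finset.mul_sum]
    exact Finset.sum_congr rfl fun i _ => by ring
  rw [key]
  refine tsum_nonneg fun m => ?_
  have h1 : 0 ≤ Real.exp (-c) * (c ^ m / m.factorial) := by positivity
  exact mul_nonneg h1 ((cmono_inv_succ.pow m) q p)
/-- Truncation: zero out the first `k` entries. -/
noncomputable def trunc (k : ℕ) (a : ℕ → ℝ) : ℕ → ℝ := fun l => if k ≤ l then a l else 0

/-- The alternating binomial transform `∑_{l=0}^{B} C(B,l) (-1)^l a l`. -/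
noncomputable def bsum (a : ℕ → ℝ) (B : ℕ) : ℝ :=
  ∑ l ∈ Finset.range (B + 1), (B.choose l : ℝ) * (-1 : ℝ) ^ l * a l

lemma pascal_sum (y : ℕ → ℝ) (B : ℕ) :
    ∑ l ∈ Finset.range (B + 2), ((B + 1).choose l : ℝ) * y l
      = ∑ l ∈ Finset.range (B + 1), (B.choose l : ℝ) * y l
        + ∑ l ∈ Finset.range (B + 1), (B.choose l : ℝ) * y (l + 1) := by
  rw [Finset.sum_range_succ' (fun l => ((B + 1).choose l : ℝ) * y l) (B + 1)]
  have e1 : ∀ l ∈ Finset.range (B + 1), ((B + 1).choose (l + 1) : ℝ) * y (l + 1)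
      = (B.choose l : ℝ) * y (l + 1) + (B.choose (l + 1) : ℝ) * y (l + 1) := by
    intro l _
    rw [Nat.choose_succ_succ]
    push_cast
    ring
  rw [Finset.sum_congr rfl e1, Finset.sum_add_distrib]
  have e2 : ∑ l ∈ Finset.range (B + 1), (B.choose (l + 1) : ℝ) * y (l + 1)
        + ((B + 1).choose 0 : ℝ) * y 0
      = ∑ l ∈ Finset.range (B + 1), (B.choose l : ℝ) * y l := by
    rw [Finset.sum_range_succ (fun l => (B.choose (l + 1) : ℝ) * y (l + 1)) B]
    simp only [Nat.choose_succ_self, Nat.cast_zero, zero_mul, add_zero,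
      Nat.choose_zero_right, Nat.cast_one, one_mul]
    rw [Finset.sum_range_succ' (fun l => (B.choose l : ℝ) * y l) B]
    simp
  linarith [e2]

lemma bsum_succ (a : ℕ → ℝ) (B : ℕ) :
    bsum a (B + 1) = bsum a B
      - ∑ l ∈ Finset.range (B + 1), (B.choose l : ℝ) * (-1 : ℝ) ^ l * a (l + 1) := by
  unfold bsum
  have := pascal_sum (fun l => (-1 : ℝ) ^ l * a l) B
  have e1 : ∑ l ∈ Finset.range (B + 2), ((B + 1).choose l : ℝ) * (-1 : ℝ) ^ l * a l
      = ∑ l ∈ Finset.range (B + 2), ((B + 1).choose l : ℝ) * ((-1 : ℝ) ^ l * a l) := by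
    exact Finset.sum_congr rfl fun l _ => by ring
  have e2 : ∑ l ∈ Finset.range (B + 1), (B.choose l : ℝ) * (-1 : ℝ) ^ l * a l
      = ∑ l ∈ Finset.range (B + 1), (B.choose l : ℝ) * ((-1 : ℝ) ^ l * a l) := by
    exact Finset.sum_congr rfl fun l _ => by ring
  have e3 : ∑ l ∈ Finset.range (B + 1), (B.choose l : ℝ) * ((-1 : ℝ) ^ (l + 1) * a (l + 1))
      = -∑ l ∈ Finset.range (B + 1), (B.choose l : ℝ) * (-1 : ℝ) ^ l * a (l + 1) := by
    rw [← Finset.sum_neg_distrib]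
    exact Finset.sum_congr rfl fun l _ => by ring
  rw [e1, e2, this]
  rw [show (∑ l ∈ Finset.range (B + 1), (B.choose l : ℝ) * ((-1:ℝ) ^ (l+1) * a (l+1)))
      = ∑ l ∈ Finset.range (B + 1), (B.choose l : ℝ) * ((fun j => (-1:ℝ) ^ j * a j) (l+1)) from rfl] at e3
  linarith [e3]

lemma g_key {a : ℕ → ℝ} (ha : CMono a) : ∀ B : ℕ, 0 ≤ bsum (trunc 2 a) B := by
  intro B
  induction B with
  | zero => simp [bsum, trunc]
  | succ B ih =>
      rw [bsum_succ]
      have step : ∑ l ∈ Finset.range (B + 1), (B.choose l : ℝ) * (-1 : ℝ) ^ l * trunc 2 a (l + 1)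
          = altT a B 1 - a 1 := by
        unfold altT
        rw [Finset.sum_range_succ' (fun l => (B.choose l : ℝ) * (-1 : ℝ) ^ l * trunc 2 a (l + 1)) B]
        rw [Finset.sum_range_succ' (fun i => (-1 : ℝ) ^ i * (B.choose i : ℝ) * a (1 + i)) B]
        have h0 : trunc 2 a (0 + 1) = 0 := by simp [trunc]
        have h1 : (1 : ℕ) + 0 = 1 := rfl
        rw [h0, h1]
        have e : ∀ l ∈ Finset.range B,
            (B.choose (l + 1) : ℝ) * (-1 : ℝ) ^ (l + 1) * trunc 2 a (l + 1 + 1)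
            = (-1 : ℝ) ^ (l + 1) * (B.choose (l + 1) : ℝ) * a (1 + (l + 1)) := by
          intro l _
          have ht : trunc 2 a (l + 1 + 1) = a (l + 1 + 1) := by
            simp [trunc, Nat.le_add_left]
          have hi : l + 1 + 1 = 1 + (l + 1) := by omega
          rw [ht, hi]
          ring
        rw [Finset.sum_congr rfl e]
        simp
      rw [step]
      have hle := altT_le_self ha B 1
      linarith

lemma h_key {a : ℕ → ℝ} (ha : CMono a) : ∀ B : ℕ, bsum (trunc 3 a) B ≤ 0 := by
  intro B
  induction B with
  | zero => simp [bsum, trunc]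
  | succ B ih =>
      rw [bsum_succ]
      have step : ∑ l ∈ Finset.range (B + 1), (B.choose l : ℝ) * (-1 : ℝ) ^ l * trunc 3 a (l + 1)
          = bsum (trunc 2 (fun l => a (l + 1))) B := by
        unfold bsum
        refine Finset.sum_congr rfl fun l _ => ?_
        have : trunc 3 a (l + 1) = trunc 2 (fun j => a (j + 1)) l := by
          unfold trunc
          by_cases h : 2 ≤ l
          · rw [if_pos h, if_pos (by omega)]
          · rw [if_neg h, if_neg (by omega)]
        rw [this]
      rw [step]
      have := g_key ha.shift B
      linarith

lemma bsum_split (a : ℕ → ℝ) (B k : ℕ) (hk : k ≤ B + 3) :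
    bsum a B = bsum (trunc k a) B
      + ∑ l ∈ Finset.range k, (B.choose l : ℝ) * (-1 : ℝ) ^ l * a l := by
  have h1 : bsum a B - bsum (trunc k a) B
      = ∑ l ∈ Finset.range (B + 1), (B.choose l : ℝ) * (-1 : ℝ) ^ l * (a l - trunc k a l) := by
    unfold bsum
    rw [← Finset.sum_sub_distrib]
    exact Finset.sum_congr rfl fun l _ => by ring
  have h2 : ∑ l ∈ Finset.range (B + 1), (B.choose l : ℝ) * (-1 : ℝ) ^ l * (a l - trunc k a l)
      = ∑ l ∈ Finset.range (B + 3), (B.choose l : ℝ) * (-1 : ℝ) ^ l * (a l - trunc k a l) := by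
    refine Finset.sum_subset (Finset.range_subset_range.2 (by omega)) fun l _ hl => ?_
    have hB : B < l := by
      simp only [Finset.mem_range, not_lt] at hl
      omega
    rw [Nat.choose_eq_zero_of_lt hB]
    simp
  have h3 : ∑ l ∈ Finset.range (B + 3), (B.choose l : ℝ) * (-1 : ℝ) ^ l * (a l - trunc k a l)
      = ∑ l ∈ Finset.range k, (B.choose l : ℝ) * (-1 : ℝ) ^ l * (a l - trunc k a l) := by
    refine (Finset.sum_subset (Finset.range_subset_range.2 hk) fun l _ hl => ?_).symm
    have hkl : k ≤ l := by
      simp only [Finset.mem_range, not_lt] at hl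
      omega
    unfold trunc
    rw [if_pos hkl]
    simp
  have h4 : ∑ l ∈ Finset.range k, (B.choose l : ℝ) * (-1 : ℝ) ^ l * (a l - trunc k a l)
      = ∑ l ∈ Finset.range k, (B.choose l : ℝ) * (-1 : ℝ) ^ l * a l := by
    refine Finset.sum_congr rfl fun l hl => ?_
    have : ¬ k ≤ l := by
      simp only [Finset.mem_range] at hl
      omega
    unfold trunc
    rw [if_neg this]
    ring
  rw [h4] at h3
  linarith [h1, h2.symm ▸ h1]



/-- The paper's closed-form steady-state swarm self-sustainability
`p̂(B,ρ) = ∑_{l=0}^{B} C(B,l) (-1)^l e^{-(B+1)ρ l/(l+1)}`. -/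
noncomputable def phat (B : ℕ) (ρ : ℝ) : ℝ :=
  ∑ l ∈ Finset.range (B + 1),
    (B.choose l : ℝ) * (-1 : ℝ) ^ l * Real.exp (-(((B : ℝ) + 1) * ρ * l / ((l : ℝ) + 1)))

/-- for every integer `B ≥ 1` and every real `ρ ≥ 0`, the Bonferroni
bounds `1 - B e^{-(B+1)ρ/2} ≤ p̂(B,ρ) ≤ 1 - B e^{-(B+1)ρ/2} + (B(B-1)/2) e^{-2(B+1)ρ/3}`
hold. -/
theorem stmt15 (B : ℕ) (hB : 1 ≤ B) (ρ : ℝ) (hρ : 0 ≤ ρ) :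
    1 - (B : ℝ) * Real.exp (-(((B : ℝ) + 1) * ρ / 2)) ≤ phat B ρ ∧
    phat B ρ ≤ 1 - (B : ℝ) * Real.exp (-(((B : ℝ) + 1) * ρ / 2)) +
      ((B : ℝ) * ((B : ℝ) - 1) / 2) * Real.exp (-(2 * ((B : ℝ) + 1) * ρ / 3)) := by
  set c : ℝ := ((B : ℝ) + 1) * ρ with hc
  set a : ℕ → ℝ := fun l => Real.exp (-(c * (l : ℝ) / ((l : ℝ) + 1))) with haa
  have hc0 : 0 ≤ c := by positivity
  have ha : CMono a := cmono_exp_seq c hc0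
  have hphat : phat B ρ = bsum a B := rfl
  have ha0 : a 0 = 1 := by
    simp [haa]
  have ha1 : a 1 = Real.exp (-(((B : ℝ) + 1) * ρ / 2)) := by
    show Real.exp (-(c * ((1 : ℕ) : ℝ) / (((1 : ℕ) : ℝ) + 1))) = _
    have : -(c * ((1 : ℕ) : ℝ) / (((1 : ℕ) : ℝ) + 1)) = -(((B : ℝ) + 1) * ρ / 2) := by
      rw [hc]; push_cast; ring
    rw [this]
  have ha2 : a 2 = Real.exp (-(2 * ((B : ℝ) + 1) * ρ / 3)) := by
    show Real.exp (-(c * ((2 : ℕ) : ℝ) / (((2 : ℕ) : ℝ) + 1))) = _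
    have : -(c * ((2 : ℕ) : ℝ) / (((2 : ℕ) : ℝ) + 1)) = -(2 * ((B : ℝ) + 1) * ρ / 3) := by
      rw [hc]; push_cast; ring
    rw [this]
  constructor
  · have hsplit := bsum_split a B 2 (by omega)
    have hsum2 : ∑ l ∈ Finset.range 2, (B.choose l : ℝ) * (-1 : ℝ) ^ l * a l
        = 1 - (B : ℝ) * Real.exp (-(((B : ℝ) + 1) * ρ / 2)) := by
      rw [Finset.sum_range_succ, Finset.sum_range_one]
      simp only [Nat.choose_zero_right, Nat.choose_one_right, Nat.cast_one, pow_zero, pow_one]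
      rw [ha0, ha1]
      ring
    have hg := g_key ha B
    rw [hphat, hsplit, hsum2]
    linarith
  · have hsplit := bsum_split a B 3 (by omega)
    have hsum3 : ∑ l ∈ Finset.range 3, (B.choose l : ℝ) * (-1 : ℝ) ^ l * a l
        = 1 - (B : ℝ) * Real.exp (-(((B : ℝ) + 1) * ρ / 2))
          + ((B : ℝ) * ((B : ℝ) - 1) / 2) * Real.exp (-(2 * ((B : ℝ) + 1) * ρ / 3)) := by
      rw [Finset.sum_range_succ, Finset.sum_range_succ, Finset.sum_range_one]
      simp only [Nat.choose_zero_right, Nat.choose_one_right, Nat.cast_one, pow_zero, pow_one]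
      rw [ha0, ha1, ha2, Nat.cast_choose_two]
      ring
    have hh := h_key ha B
    rw [hphat, hsplit, hsum3]
    linarith
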